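/- Let L be the combinatorial graph Laplacian of a connected weighted graph on vertex set V, and let V_1 ⊊ V with V_1 and V_1^c nonempty and |V_1| ≥ 2. Then the smallest eigenvalue of the Kron reduction K(L,V_1) equals 0 (matching the smallest eigenvalue of L), and the largest eigenvalue of K(L,V_1) is at most the largest eigenvalue λ_max of L. -/

import Mathlib

open Matrix

noncomputable def deg {n : Type*} [Fintype n] (W : Matrix n n ℝ) (i : n) : ℝ := ∑ j, W i j

noncomputable def lap {n : Type*} [Fintype n] [DecidableEq n] (W : Matrix n n ℝ) :
    Matrix n n ℝ :=
  Matrix.diagonal (deg W) - W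

def IsConn {n : Type*} (W : Matrix n n ℝ) : Prop :=
  ∀ i j : n, Relation.ReflTransGen (fun a b => 0 < W a b) i j

def IsBipartiteWith {n : Type*} (W : Matrix n n ℝ) (V1 : Set n) : Prop :=
  ∀ i j, 0 < W i j → (i ∈ V1 ↔ j ∉ V1)

open Classical in
noncomputable def sortedEigs {n : Type*} [Fintype n] [DecidableEq n] (A : Matrix n n ℝ) :
    Fin (Fintype.card n) → ℝ :=
  if h : A.IsHermitian then
    (fun i => h.eigenvalues ((Fintype.equivFin n).symm i)) ∘
      ⇑(Tuple.sort fun i => h.eigenvalues ((Fintype.equivFin n).symm i))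
  else 0

noncomputable def kron {n : Type*} [Fintype n] [DecidableEq n] (L : Matrix n n ℝ)
    (V1 : Finset n) : Matrix ↥V1 ↥V1 ℝ :=
  L.submatrix (Subtype.val : ↥V1 → n) (Subtype.val : ↥V1 → n) -
    L.submatrix (Subtype.val : ↥V1 → n) (Subtype.val : ↥(V1ᶜ) → n) *
      (L.submatrix (Subtype.val : ↥(V1ᶜ) → n) (Subtype.val : ↥(V1ᶜ) → n))⁻¹ *
      L.submatrix (Subtype.val : ↥(V1ᶜ) → n) (Subtype.val : ↥V1 → n)

noncomputable def wred {m : Type*} [DecidableEq m] (K : Matrix m m ℝ) : Matrix m m ℝ :=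
  Matrix.of fun i j => if i = j then 0 else -K i j

section auxEigs
variable {n : Type*} [Fintype n] [DecidableEq n]

lemma mySortedEigs_eq (A : Matrix n n ℝ) (hA : A.IsHermitian) :
    sortedEigs A = (fun i => hA.eigenvalues ((Fintype.equivFin n).symm i)) ∘
      ⇑(Tuple.sort fun i => hA.eigenvalues ((Fintype.equivFin n).symm i)) := by
  rw [sortedEigs, dif_pos hA]

lemma mySortedEigs_monotone {A : Matrix n n ℝ} (hA : A.IsHermitian) :
    Monotone (sortedEigs A) := by
  rw [mySortedEigs_eq A hA]; exact Tuple.monotone_sort _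

lemma mySortedEigs_mem {A : Matrix n n ℝ} (hA : A.IsHermitian) (k : Fin (Fintype.card n)) :
    ∃ i, sortedEigs A k = hA.eigenvalues i := by
  rw [mySortedEigs_eq A hA]; exact ⟨_, rfl⟩

lemma mySortedEigs_surj {A : Matrix n n ℝ} (hA : A.IsHermitian) (i : n) :
    ∃ k, sortedEigs A k = hA.eigenvalues i := by
  rw [mySortedEigs_eq A hA]
  refine ⟨(Tuple.sort fun j => hA.eigenvalues ((Fintype.equivFin n).symm j))⁻¹
    (Fintype.equivFin n i), ?_⟩
  simp

lemma myEig_le_of_posSemidef {A : Matrix n n ℝ} (hA : A.IsHermitian) (c : ℝ)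
    (h : (c • (1 : Matrix n n ℝ) - A).PosSemidef) (i : n) : hA.eigenvalues i ≤ c := by
  set v : n → ℝ := ⇑(hA.eigenvectorBasis i) with hv
  have hv0 : v ≠ 0 := by
    have := hA.eigenvectorBasis.orthonormal.ne_zero i
    intro hc
    apply this
    ext j
    exact congrFun hc j
  have h2 := (posSemidef_iff_dotProduct_mulVec.mp h).2 v
  rw [star_trivial, sub_mulVec, dotProduct_sub, smul_mulVec, one_mulVec,
    hA.mulVec_eigenvectorBasis, dotProduct_smul, dotProduct_smul, smul_eq_mul, smul_eq_mul,
    ← hv] at h2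
  have hp : 0 < v ⬝ᵥ v := by
    rcases (Finset.sum_nonneg fun j _ => mul_self_nonneg (v j)).lt_or_eq with h | h
    · exact h
    · exact absurd (dotProduct_self_eq_zero.mp h.symm) hv0
  nlinarith [h2, hp]

lemma myPosSemidef_smul_one_sub {A : Matrix n n ℝ} (hA : A.IsHermitian) (c : ℝ)
    (h : ∀ i, hA.eigenvalues i ≤ c) : (c • (1 : Matrix n n ℝ) - A).PosSemidef := by
  have hU : (hA.eigenvectorUnitary : Matrix n n ℝ) * star (hA.eigenvectorUnitary : Matrix n n ℝ)
      = 1 := (Matrix.mem_unitaryGroup_iff).mp hA.eigenvectorUnitary.2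
  have key : c • (1 : Matrix n n ℝ) - A =
      (hA.eigenvectorUnitary : Matrix n n ℝ) * diagonal (fun i => c - hA.eigenvalues i) *
        star (hA.eigenvectorUnitary : Matrix n n ℝ) := by
    have hd : (diagonal (fun i => c - hA.eigenvalues i) : Matrix n n ℝ)
        = c • 1 - diagonal (RCLike.ofReal ∘ hA.eigenvalues) := by
      rw [smul_one_eq_diagonal, ← diagonal_sub]
      congr 1
    rw [hd, Matrix.mul_sub, Matrix.sub_mul]
    congr 1
    · rw [Matrix.mul_smul, Matrix.mul_one, Matrix.smul_mul, hU]
    · exact hA.spectral_theorem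
  rw [key]
  have hd : (diagonal (fun i => c - hA.eigenvalues i) : Matrix n n ℝ).PosSemidef :=
    posSemidef_diagonal_iff.mpr fun i => sub_nonneg.mpr (h i)
  simpa [Matrix.star_eq_conjTranspose] using
    hd.mul_mul_conjTranspose_same (hA.eigenvectorUnitary : Matrix n n ℝ)

lemma mySortedEigs_zero {A : Matrix n n ℝ} (hA : A.IsHermitian)
    (hnn : ∀ i, 0 ≤ hA.eigenvalues i) (hex : ∃ i, hA.eigenvalues i = 0)
    (h0 : 0 < Fintype.card n) : sortedEigs A ⟨0, h0⟩ = 0 := by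
  obtain ⟨i0, hi0⟩ := hex
  obtain ⟨k, hk⟩ := mySortedEigs_surj hA i0
  obtain ⟨j, hj⟩ := mySortedEigs_mem hA ⟨0, h0⟩
  have h1 : sortedEigs A ⟨0, h0⟩ ≤ 0 := by
    rw [← hi0, ← hk]
    exact mySortedEigs_monotone hA (by simp [Fin.le_def])
  have h2 : 0 ≤ sortedEigs A ⟨0, h0⟩ := by rw [hj]; exact hnn j
  linarith

lemma myLe_sortedEigs_last {A : Matrix n n ℝ} (hA : A.IsHermitian) (i : n)
    (h : Fintype.card n - 1 < Fintype.card n) :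
    hA.eigenvalues i ≤ sortedEigs A ⟨Fintype.card n - 1, h⟩ := by
  obtain ⟨k, hk⟩ := mySortedEigs_surj hA i
  rw [← hk]
  have hk' : k ≤ (⟨Fintype.card n - 1, h⟩ : Fin (Fintype.card n)) := by
    rcases k with ⟨kv, hkv⟩
    exact Fin.mk_le_mk.mpr (by omega)
  exact mySortedEigs_monotone hA hk'

lemma mySortedEigs_last_le {A : Matrix n n ℝ} (hA : A.IsHermitian) (c : ℝ)
    (hb : ∀ i, hA.eigenvalues i ≤ c) (h : Fintype.card n - 1 < Fintype.card n) :
    sortedEigs A ⟨Fintype.card n - 1, h⟩ ≤ c := by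
  obtain ⟨j, hj⟩ := mySortedEigs_mem hA ⟨Fintype.card n - 1, h⟩
  rw [hj]; exact hb j

lemma myPosSemidef_toBlocks11 {m l : Type*} [Fintype m] [Fintype l]
    {M : Matrix (m ⊕ l) (m ⊕ l) ℝ} (hM : M.PosSemidef) : (M.toBlocks₁₁).PosSemidef := by
  refine posSemidef_iff_dotProduct_mulVec.mpr ⟨?_, ?_⟩
  · ext i j
    have h := congrFun (congrFun hM.1 (Sum.inl i)) (Sum.inl j)
    simpa [conjTranspose_apply, toBlocks₁₁] using h
  · intro x
    have h := (posSemidef_iff_dotProduct_mulVec.mp hM).2 (Sum.elim x 0)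
    rw [star_trivial, ← fromBlocks_toBlocks M, fromBlocks_mulVec] at h
    rw [sumElim_dotProduct_sumElim] at h
    simpa [star_trivial] using h

end auxEigs

section auxLap
variable {n : Type*} [Fintype n] [DecidableEq n] {W : Matrix n n ℝ}

lemma myLap_isHermitian (hsymm : W.IsSymm) : (lap W).IsHermitian := by
  have hW : W.IsHermitian := by
    rw [Matrix.IsHermitian]
    ext i j
    simpa using hsymm.apply i j
  exact (Matrix.isHermitian_diagonal _).sub hW

lemma myLap_quad (hsymm : W.IsSymm) (x : n → ℝ) :
    x ⬝ᵥ (lap W *ᵥ x) = (1/2) * ∑ i, ∑ j, W i j * (x i - x j)^2 := by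
  have hS : x ⬝ᵥ (lap W *ᵥ x) = ∑ i, ∑ j, W i j * x i * (x i - x j) := by
    rw [dotProduct]
    refine Finset.sum_congr rfl fun i _ => ?_
    have h2 : (W *ᵥ x) i = ∑ j, W i j * x j := by simp [mulVec, dotProduct]
    have : (lap W *ᵥ x) i = ∑ j, W i j * x i - ∑ j, W i j * x j := by
      have h1 : (Matrix.diagonal (deg W) *ᵥ x) i = deg W i * x i := mulVec_diagonal _ _ _
      simp only [lap, sub_mulVec, Pi.sub_apply, h1, h2, deg, Finset.sum_mul]
    rw [this, ← Finset.sum_sub_distrib, Finset.mul_sum]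
    refine Finset.sum_congr rfl fun j _ => ?_
    ring
  have hT : (∑ i, ∑ j, W i j * x j * (x i - x j))
      = - ∑ i, ∑ j, W i j * x i * (x i - x j) := by
    rw [Finset.sum_comm, ← Finset.sum_neg_distrib]
    refine Finset.sum_congr rfl fun j _ => ?_
    rw [← Finset.sum_neg_distrib]
    refine Finset.sum_congr rfl fun i _ => ?_
    rw [hsymm.apply j i]
    ring
  have hsplit : ∑ i, ∑ j, W i j * (x i - x j)^2
      = (∑ i, ∑ j, W i j * x i * (x i - x j)) - ∑ i, ∑ j, W i j * x j * (x i - x j) := by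
    rw [← Finset.sum_sub_distrib]
    refine Finset.sum_congr rfl fun i _ => ?_
    rw [← Finset.sum_sub_distrib]
    refine Finset.sum_congr rfl fun j _ => ?_
    ring
  rw [hS, hsplit, hT]
  ring

lemma myLap_quad_nonneg (hsymm : W.IsSymm) (hnonneg : ∀ i j, 0 ≤ W i j) (x : n → ℝ) :
    0 ≤ x ⬝ᵥ (lap W *ᵥ x) := by
  rw [myLap_quad hsymm]
  have : 0 ≤ ∑ i, ∑ j, W i j * (x i - x j)^2 :=
    Finset.sum_nonneg fun i _ => Finset.sum_nonneg fun j _ =>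
      mul_nonneg (hnonneg i j) (sq_nonneg _)
  linarith

lemma myLap_posSemidef (hsymm : W.IsSymm) (hnonneg : ∀ i j, 0 ≤ W i j) :
    (lap W).PosSemidef :=
  posSemidef_iff_dotProduct_mulVec.mpr ⟨myLap_isHermitian hsymm, fun x => by
    rw [star_trivial]; exact myLap_quad_nonneg hsymm hnonneg x⟩

lemma myLap_quad_eq_zero (hsymm : W.IsSymm) (hnonneg : ∀ i j, 0 ≤ W i j) {x : n → ℝ}
    (hx : x ⬝ᵥ (lap W *ᵥ x) = 0) {i j : n} (hij : 0 < W i j) : x i = x j := by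
  rw [myLap_quad hsymm] at hx
  have h0 : ∑ i, ∑ j, W i j * (x i - x j)^2 = 0 := by linarith
  have hterm : W i j * (x i - x j)^2 = 0 := by
    have h1 := (Finset.sum_eq_zero_iff_of_nonneg (fun i _ => Finset.sum_nonneg fun j _ =>
      mul_nonneg (hnonneg i j) (sq_nonneg _))).mp h0 i (Finset.mem_univ i)
    exact (Finset.sum_eq_zero_iff_of_nonneg (fun j _ =>
      mul_nonneg (hnonneg i j) (sq_nonneg _))).mp h1 j (Finset.mem_univ j)
  have := (mul_eq_zero.mp hterm).resolve_left (ne_of_gt hij)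
  have := pow_eq_zero_iff (n := 2) (by norm_num) |>.mp this
  linarith [sub_eq_zero.mp this]

lemma myLap_const_of_quad_zero (hsymm : W.IsSymm) (hnonneg : ∀ i j, 0 ≤ W i j)
    (hconn : IsConn W) {x : n → ℝ} (hx : x ⬝ᵥ (lap W *ᵥ x) = 0) (i j : n) : x i = x j := by
  induction hconn i j with
  | refl => rfl
  | tail _ hbc ih => exact ih.trans (myLap_quad_eq_zero hsymm hnonneg hx hbc)

lemma myLap_mulVec_one : lap W *ᵥ (fun _ => (1:ℝ)) = 0 := by
  funext i
  simp [lap, sub_mulVec, mulVec, dotProduct, deg, diagonal]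

end auxLap

/-- The smallest eigenvalue of the Kron reduction of a connected graph Laplacian is `0`
(matching the smallest eigenvalue of `L`), and its largest eigenvalue is at most the
largest eigenvalue of `L`. -/
theorem kron_reduction_extreme_eigenvalues
    {N : ℕ} (W : Matrix (Fin N) (Fin N) ℝ)
    (hsymm : W.IsSymm) (hnonneg : ∀ i j, 0 ≤ W i j) (hdiag : ∀ i, W i i = 0)
    (hconn : IsConn W) (V1 : Finset (Fin N)) (hcard : 2 ≤ V1.card) (h2 : V1ᶜ.Nonempty) :
    sortedEigs (kron (lap W) V1) ⟨0, by simp only [Fintype.card_coe]; omega⟩ = 0 ∧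
    sortedEigs (lap W) ⟨0, by
        simp only [Fintype.card_fin]
        have hle : V1.card ≤ N := by simpa using V1.card_le_univ
        omega⟩ = 0 ∧
    sortedEigs (kron (lap W) V1)
        ⟨Fintype.card ↥V1 - 1, by simp only [Fintype.card_coe]; omega⟩ ≤
      sortedEigs (lap W) ⟨N - 1, by
        simp only [Fintype.card_fin]
        have hle : V1.card ≤ N := by simpa using V1.card_le_univ
        omega⟩ := by
  classical
  have hNpos : 0 < N := by
    have hle : V1.card ≤ N := by simpa using V1.card_le_univ
    omega
  set L := lap W with hLdef
  have hLher : L.IsHermitian := myLap_isHermitian hsymm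
  have hLpsd : L.PosSemidef := myLap_posSemidef hsymm hnonneg
  have hLsym : ∀ i j, L j i = L i j := by
    intro i j
    conv_lhs => rw [← hLher]
    simp [conjTranspose_apply]
  -- the equivalence splitting Fin N
  let e : (↥V1 ⊕ ↥(V1ᶜ)) ≃ Fin N :=
    (Equiv.sumCongr (Equiv.refl ↥V1)
      (Equiv.subtypeEquivRight (fun x => Finset.mem_compl))).trans
      (Equiv.sumCompl (· ∈ V1))
  have he1 : ∀ i : ↥V1, e (Sum.inl i) = (i : Fin N) := by intro i; simp [e]
  have he2 : ∀ j : ↥(V1ᶜ), e (Sum.inr j) = (j : Fin N) := by intro j; simp [e]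
  set A := L.submatrix (Subtype.val : ↥V1 → Fin N) (Subtype.val : ↥V1 → Fin N) with hAdef
  set B := L.submatrix (Subtype.val : ↥V1 → Fin N) (Subtype.val : ↥(V1ᶜ) → Fin N) with hBdef
  set C := L.submatrix (Subtype.val : ↥(V1ᶜ) → Fin N) (Subtype.val : ↥V1 → Fin N) with hCdef
  set D := L.submatrix (Subtype.val : ↥(V1ᶜ) → Fin N) (Subtype.val : ↥(V1ᶜ) → Fin N) with hDdef
  have hCB : C = Bᴴ := by
    ext j i
    simp [hBdef, hCdef, conjTranspose_apply, hLsym]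
  have hblock : L.submatrix ⇑e ⇑e = fromBlocks A B C D := by
    ext s t
    rcases s with i | i <;> rcases t with j | j <;>
      simp [submatrix_apply, he1, he2, hAdef, hBdef, hCdef, hDdef]
  -- D is positive definite
  have hDher : D.IsHermitian := by
    ext i j
    simp [hDdef, conjTranspose_apply, hLsym]
  have hDpd : D.PosDef := by
    refine posDef_iff_dotProduct_mulVec.mpr ⟨hDher, fun x hx => ?_⟩
    rw [star_trivial]
    set xt : Fin N → ℝ := fun k => if h : k ∈ V1ᶜ then x ⟨k, h⟩ else 0 with hxt
    have hxt_inl : ∀ i : ↥V1, xt (i : Fin N) = 0 := by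
      intro i
      rw [hxt]
      exact dif_neg (by simp [Finset.mem_compl])
    have hxt_inr : ∀ j : ↥(V1ᶜ), xt (j : Fin N) = x j := fun j => dif_pos j.2
    have hmv : ∀ k, (L *ᵥ xt) k = ∑ j : ↥(V1ᶜ), L k j * x j := by
      intro k
      have h0 : (L *ᵥ xt) k = ∑ l, L k l * xt l := by simp [mulVec, dotProduct]
      rw [h0, ← Equiv.sum_comp e (fun l => L k l * xt l), Fintype.sum_sum_type]
      simp [he1, he2, hxt_inl, hxt_inr]
    have hquad : x ⬝ᵥ (D *ᵥ x) = xt ⬝ᵥ (L *ᵥ xt) := by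
      rw [dotProduct, dotProduct, ← Equiv.sum_comp e (fun k => xt k * (L *ᵥ xt) k),
        Fintype.sum_sum_type]
      simp only [he1, he2, hxt_inl, hxt_inr, zero_mul, Finset.sum_const_zero, zero_add]
      refine Finset.sum_congr rfl fun j _ => ?_
      rw [hmv]
      simp [hDdef, mulVec, dotProduct]
    have hnn : 0 ≤ x ⬝ᵥ (D *ᵥ x) := by
      rw [hquad]; exact myLap_quad_nonneg hsymm hnonneg xt
    rcases hnn.lt_or_eq with h | h
    · exact h
    · exfalso
      apply hx
      have hconst : ∀ i j, xt i = xt j :=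
        myLap_const_of_quad_zero hsymm hnonneg hconn (by rw [← hquad, ← h])
      obtain ⟨v, hv⟩ := Finset.card_pos.mp (by omega : 0 < V1.card)
      funext j
      have := hconst (j : Fin N) v
      rw [hxt_inr j, hxt_inl ⟨v, hv⟩] at this
      exact this
  have hdetD : IsUnit D.det := isUnit_iff_ne_zero.mpr hDpd.det_pos.ne'
  haveI : Invertible D := D.invertibleOfIsUnitDet hdetD
  -- K
  set K := kron L V1 with hKdef
  have hKeq : K = A - B * D⁻¹ * Bᴴ := by
    rw [hKdef, kron, ← hCB, ← hAdef, ← hBdef, ← hCdef, ← hDdef]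
  have hFBpsd : (fromBlocks A B Bᴴ D).PosSemidef := by
    rw [← hCB, ← hblock]
    exact (posSemidef_submatrix_equiv e).mpr hLpsd
  have hKpsd : K.PosSemidef := by
    rw [hKeq]
    exact (PosDef.fromBlocks₂₂ A B hDpd).mp hFBpsd
  have hKher : K.IsHermitian := hKpsd.1
  -- K annihilates the constant vector
  have hrow : ∀ k, ∑ l, L k l = 0 := by
    intro k
    have h := congrFun (myLap_mulVec_one (W := W)) k
    rw [← hLdef] at h
    simpa [mulVec, dotProduct] using h
  have hsplitrow : ∀ k : Fin N, (∑ i : ↥V1, L k i) + (∑ j : ↥(V1ᶜ), L k j) = 0 := by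
    intro k
    have h := hrow k
    rw [← Equiv.sum_comp e (fun l => L k l), Fintype.sum_sum_type] at h
    simpa [he1, he2] using h
  have hone1 : A *ᵥ (fun _ => (1:ℝ)) + B *ᵥ (fun _ => (1:ℝ)) = 0 := by
    funext i
    have h := hsplitrow (i : Fin N)
    simpa [hAdef, hBdef, mulVec, dotProduct] using h
  have hone2 : C *ᵥ (fun _ => (1:ℝ)) + D *ᵥ (fun _ => (1:ℝ)) = 0 := by
    funext j
    have h := hsplitrow (j : Fin N)
    simpa [hCdef, hDdef, mulVec, dotProduct] using h
  have hKone : K *ᵥ (fun _ => (1:ℝ)) = 0 := by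
    have hD1 : D *ᵥ (fun _ => (1:ℝ)) = -(C *ᵥ fun _ => (1:ℝ)) :=
      eq_neg_of_add_eq_zero_right hone2
    have hBDB : (B * D⁻¹ * Bᴴ) *ᵥ (fun _ => (1:ℝ)) = -(B *ᵥ fun _ => (1:ℝ)) := by
      rw [← mulVec_mulVec, ← mulVec_mulVec, ← hCB]
      have : C *ᵥ (fun _ => (1:ℝ)) = -(D *ᵥ fun _ => (1:ℝ)) :=
        eq_neg_of_add_eq_zero_left hone2
      rw [this, mulVec_neg, mulVec_mulVec, Matrix.nonsing_inv_mul D hdetD, one_mulVec,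
        mulVec_neg]
    rw [hKeq, sub_mulVec, hBDB]
    have := hone1
    funext i
    have h := congrFun hone1 i
    simp only [Pi.add_apply, Pi.zero_apply] at h
    simp only [Pi.sub_apply, Pi.neg_apply, Pi.zero_apply]
    linarith
  have hV1ne : (0 : ℕ) < Fintype.card ↥V1 := by
    simp only [Fintype.card_coe]; omega
  have hone_ne : (fun _ => (1:ℝ)) ≠ (0 : ↥V1 → ℝ) := by
    obtain ⟨v, hv⟩ := Finset.card_pos.mp (by omega : 0 < V1.card)
    intro hcon
    exact one_ne_zero (congrFun hcon ⟨v, hv⟩)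
  have hdetK : K.det = 0 := (Matrix.exists_mulVec_eq_zero_iff).mp ⟨_, hone_ne, hKone⟩
  have hex0 : ∃ i, hKher.eigenvalues i = 0 := by
    by_contra hcon
    push_neg at hcon
    have h := hKher.det_eq_prod_eigenvalues
    rw [hdetK] at h
    exact absurd h.symm (Finset.prod_ne_zero_iff.mpr fun i _ => by
      simpa using hcon i)
  -- first claim
  have claim1 : sortedEigs K ⟨0, hV1ne⟩ = 0 :=
    mySortedEigs_zero hKher (fun i => hKpsd.eigenvalues_nonneg i) hex0 hV1ne
  -- second claim
  have hNcard : (0:ℕ) < Fintype.card (Fin N) := by simpa using hNpos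
  have hone_neN : (fun _ => (1:ℝ)) ≠ (0 : Fin N → ℝ) := by
    intro hcon
    exact one_ne_zero (congrFun hcon ⟨0, hNpos⟩)
  have hdetL : L.det = 0 := (Matrix.exists_mulVec_eq_zero_iff).mp
    ⟨_, hone_neN, by rw [hLdef]; exact myLap_mulVec_one⟩
  have hex0L : ∃ i, hLher.eigenvalues i = 0 := by
    by_contra hcon
    push_neg at hcon
    have h := hLher.det_eq_prod_eigenvalues
    rw [hdetL] at h
    exact absurd h.symm (Finset.prod_ne_zero_iff.mpr fun i _ => by
      simpa using hcon i)
  have claim2 : sortedEigs L ⟨0, hNcard⟩ = 0 :=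
    mySortedEigs_zero hLher (fun i => hLpsd.eigenvalues_nonneg i) hex0L hNcard
  -- third claim
  have hNlast : Fintype.card (Fin N) - 1 < Fintype.card (Fin N) := by
    simp only [Fintype.card_fin]; omega
  set c := sortedEigs L ⟨Fintype.card (Fin N) - 1, hNlast⟩ with hcdef
  have hble : ∀ i, hLher.eigenvalues i ≤ c := fun i => myLe_sortedEigs_last hLher i hNlast
  have hLb : (c • (1 : Matrix (Fin N) (Fin N) ℝ) - L).PosSemidef :=
    myPosSemidef_smul_one_sub hLher c hble
  have hsub : ((c • (1 : Matrix (Fin N) (Fin N) ℝ) - L).submatrix ⇑e ⇑e).toBlocks₁₁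
      = c • (1 : Matrix ↥V1 ↥V1 ℝ) - A := by
    ext i j
    simp only [toBlocks₁₁, submatrix_apply, of_apply, Matrix.sub_apply, Matrix.smul_apply, one_apply,
      hAdef, he1, smul_eq_mul]
    congr 1
    simp [Subtype.val_inj]
  have hApsd : (c • (1 : Matrix ↥V1 ↥V1 ℝ) - A).PosSemidef := by
    rw [← hsub]
    exact myPosSemidef_toBlocks11 ((posSemidef_submatrix_equiv e).mpr hLb)
  have hBDBpsd : (B * D⁻¹ * Bᴴ).PosSemidef :=
    (hDpd.inv.posSemidef).mul_mul_conjTranspose_same B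
  have hcK : (c • (1 : Matrix ↥V1 ↥V1 ℝ) - K).PosSemidef := by
    have hdecomp : c • (1 : Matrix ↥V1 ↥V1 ℝ) - K
        = (c • (1 : Matrix ↥V1 ↥V1 ℝ) - A) + (B * D⁻¹ * Bᴴ) := by
      rw [hKeq]; abel
    rw [hdecomp]
    exact hApsd.add hBDBpsd
  have hKle : ∀ i, hKher.eigenvalues i ≤ c := myEig_le_of_posSemidef hKher c hcK
  have hV1last : Fintype.card ↥V1 - 1 < Fintype.card ↥V1 := by omega
  have claim3 : sortedEigs K ⟨Fintype.card ↥V1 - 1, hV1last⟩ ≤ c :=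
    mySortedEigs_last_le hKher c hKle hV1last
  refine ⟨claim1, claim2, ?_⟩
  have hidx : (⟨N - 1, by
      simp only [Fintype.card_fin]
      have hle : V1.card ≤ N := by simpa using V1.card_le_univ
      omega⟩ : Fin (Fintype.card (Fin N)))
      = ⟨Fintype.card (Fin N) - 1, hNlast⟩ := by
    ext
    simp
  rw [hidx]
  exact claim3
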